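/- Let 0 < d < s and let X, Y be independent random variables each uniformly distributed on [0,s]. Let r₁, r₂ ∈ [0,1] with r₁ + r₂ < 1, (r₁, r₂) ≠ (0,0), d ≤ s(1−r₁) and d ≤ s(1−r₂). Then the diversified positions ν₁ = (1−r₁)X + r₁Y and ν₂ = r₂X + (1−r₂)Y satisfy P(ν₁ ≤ d and ν₂ ≤ d) > P(X ≤ d and Y ≤ d) = d²/s²; that is, diversification strictly increases the probability of joint default. -/

import Mathlib

open MeasureTheory ProbabilityTheory Set

/-- The uniform probability distribution on the interval `[0, s]`. -/
noncomputable def uniformOnIcc (s : ℝ) : Measure ℝ :=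
  (ENNReal.ofReal s)⁻¹ • (volume.restrict (Icc (0 : ℝ) s))

lemma uniformOnIcc_Iic (s a : ℝ) (hs : 0 < s) (ha : 0 ≤ a) (has : a ≤ s) :
    uniformOnIcc s (Iic a) = ENNReal.ofReal (a / s) := by
  rw [uniformOnIcc, Measure.smul_apply, Measure.restrict_apply measurableSet_Iic]
  have h : Iic a ∩ Icc 0 s = Icc 0 a := by
    ext x
    simp only [mem_inter_iff, mem_Iic, mem_Icc]
    constructor
    · rintro ⟨h1, h2, _⟩; exact ⟨h2, h1⟩
    · rintro ⟨h1, h2⟩; exact ⟨h2, h1, h2.trans has⟩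
  rw [h, Real.volume_Icc, sub_zero, smul_eq_mul, ENNReal.ofReal_div_of_pos hs,
    div_eq_mul_inv, mul_comm]

lemma uniformOnIcc_Ioc (s a b : ℝ) (hs : 0 < s) (ha : 0 ≤ a) (hab : a ≤ b) (hbs : b ≤ s) :
    uniformOnIcc s (Ioc a b) = ENNReal.ofReal ((b - a) / s) := by
  rw [uniformOnIcc, Measure.smul_apply, Measure.restrict_apply measurableSet_Ioc]
  have h : Ioc a b ∩ Icc 0 s = Ioc a b := by
    apply inter_eq_left.2
    intro x hx
    exact ⟨ha.trans hx.1.le, hx.2.trans hbs⟩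
  rw [h, Real.volume_Ioc, smul_eq_mul, ENNReal.ofReal_div_of_pos hs,
    div_eq_mul_inv, mul_comm]

lemma aux_main
    {Ω : Type*} [MeasurableSpace Ω] (P : Measure Ω) [IsProbabilityMeasure P]
    (s d : ℝ) (hd : 0 < d) (hds : d < s)
    (X Y : Ω → ℝ) (hXm : Measurable X) (hYm : Measurable Y)
    (hX : P.map X = uniformOnIcc s) (hY : P.map Y = uniformOnIcc s)
    (hXY : IndepFun X Y P)
    (r₁ r₂ : ℝ) (hr₁ : r₁ ∈ Icc (0 : ℝ) 1) (hr₂ : r₂ ∈ Icc (0 : ℝ) 1)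
    (hsum : r₁ + r₂ < 1) (hr₁pos : 0 < r₁) :
    P {ω | (1 - r₁) * X ω + r₁ * Y ω ≤ d ∧ r₂ * X ω + (1 - r₂) * Y ω ≤ d}
        > P {ω | X ω ≤ d ∧ Y ω ≤ d} := by
  have hs : 0 < s := hd.trans hds
  obtain ⟨hr₁0, hr₁1⟩ := hr₁
  obtain ⟨hr₂0, hr₂1⟩ := hr₂
  set ε : ℝ := min (r₁ * d) (s - d) with hε
  have hε0 : 0 < ε := lt_min (mul_pos hr₁pos hd) (by linarith)
  have hεr : ε ≤ r₁ * d := min_le_left _ _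
  have hεs : d + ε ≤ s := by have := min_le_right (r₁ * d) (s - d); linarith
  set B : Set Ω := X ⁻¹' Iic d ∩ Y ⁻¹' Iic d with hB
  set R : Set Ω := X ⁻¹' Ioc d (d + ε) ∩ Y ⁻¹' Iic ε with hR
  have hBeq : {ω | X ω ≤ d ∧ Y ω ≤ d} = B := rfl
  have hsub : B ∪ R ⊆ {ω | (1 - r₁) * X ω + r₁ * Y ω ≤ d ∧ r₂ * X ω + (1 - r₂) * Y ω ≤ d} := by
    rintro ω (⟨hx, hy⟩ | ⟨hx, hy⟩)
    · simp only [mem_preimage, mem_Iic] at hx hy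
      constructor
      · nlinarith [mul_le_mul_of_nonneg_left hx (by linarith : (0:ℝ) ≤ 1 - r₁),
          mul_le_mul_of_nonneg_left hy hr₁0]
      · nlinarith [mul_le_mul_of_nonneg_left hx hr₂0,
          mul_le_mul_of_nonneg_left hy (by linarith : (0:ℝ) ≤ 1 - r₂)]
    · simp only [mem_preimage, mem_Ioc, mem_Iic] at hx hy
      constructor
      · nlinarith [mul_le_mul_of_nonneg_left hx.2 (by linarith : (0:ℝ) ≤ 1 - r₁),
          mul_le_mul_of_nonneg_left hy hr₁0]
      · nlinarith [mul_le_mul_of_nonneg_left hx.2 hr₂0,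
          mul_le_mul_of_nonneg_left hy (by linarith : (0:ℝ) ≤ 1 - r₂)]
  have hdisj : Disjoint B R := by
    rw [Set.disjoint_left]
    rintro ω ⟨hx, _⟩ ⟨hx', _⟩
    simp only [mem_preimage, mem_Iic, mem_Ioc] at hx hx'
    linarith [hx'.1]
  have hRmeas : MeasurableSet R := (hXm measurableSet_Ioc).inter (hYm measurableSet_Iic)
  have hPR : P R = ENNReal.ofReal (ε / s) * ENNReal.ofReal (ε / s) := by
    rw [hR, hXY.measure_inter_preimage_eq_mul _ _ measurableSet_Ioc measurableSet_Iic,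
      ← Measure.map_apply hXm measurableSet_Ioc, ← Measure.map_apply hYm measurableSet_Iic,
      hX, hY, uniformOnIcc_Ioc s d (d + ε) hs hd.le (by linarith) hεs,
      uniformOnIcc_Iic s ε hs hε0.le (by linarith)]
    ring_nf
  have hPRpos : 0 < P R := by
    rw [hPR]
    exact ENNReal.mul_pos (ENNReal.ofReal_pos.2 (div_pos hε0 hs)).ne'
      (ENNReal.ofReal_pos.2 (div_pos hε0 hs)).ne'
  calc P {ω | X ω ≤ d ∧ Y ω ≤ d} = P B := by rw [hBeq]
    _ < P B + P R := ENNReal.lt_add_right (measure_ne_top P B) hPRpos.ne'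
    _ = P (B ∪ R) := (measure_union hdisj hRmeas).symm
    _ ≤ _ := measure_mono hsub

/-- if `r₁ + r₂ < 1`, `(r₁, r₂) ≠ (0,0)`, `d ≤ s(1-r₁)` and `d ≤ s(1-r₂)`,
then diversification strictly increases the probability of joint default:
`P(ν₁ ≤ d, ν₂ ≤ d) > P(X ≤ d, Y ≤ d) = d²/s²`. -/
theorem diversification_increases_joint_default
    {Ω : Type*} [MeasurableSpace Ω] (P : Measure Ω) [IsProbabilityMeasure P]
    (s d : ℝ) (hd : 0 < d) (hds : d < s)
    (X Y : Ω → ℝ) (hXm : Measurable X) (hYm : Measurable Y)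
    (hX : P.map X = uniformOnIcc s) (hY : P.map Y = uniformOnIcc s)
    (hXY : IndepFun X Y P)
    (r₁ r₂ : ℝ) (hr₁ : r₁ ∈ Icc (0 : ℝ) 1) (hr₂ : r₂ ∈ Icc (0 : ℝ) 1)
    (hsum : r₁ + r₂ < 1) (hne : (r₁, r₂) ≠ (0, 0))
    (h1 : d ≤ s * (1 - r₁)) (h2 : d ≤ s * (1 - r₂)) :
    P {ω | (1 - r₁) * X ω + r₁ * Y ω ≤ d ∧ r₂ * X ω + (1 - r₂) * Y ω ≤ d}
        > P {ω | X ω ≤ d ∧ Y ω ≤ d} ∧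
    P {ω | X ω ≤ d ∧ Y ω ≤ d} = ENNReal.ofReal (d ^ 2 / s ^ 2) := by
  have hs : 0 < s := hd.trans hds
  constructor
  · rcases lt_or_eq_of_le hr₁.1 with hr₁pos | hr₁z
    · exact aux_main P s d hd hds X Y hXm hYm hX hY hXY r₁ r₂ hr₁ hr₂ hsum hr₁pos
    · have hr₂pos : 0 < r₂ := by
        rcases lt_or_eq_of_le hr₂.1 with h | h
        · exact h
        · exact absurd (by rw [← hr₁z, ← h] : (r₁, r₂) = (0, 0)) hne
      have key := aux_main P s d hd hds Y X hYm hXm hY hX hXY.symm r₂ r₁ hr₂ hr₁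
        (by linarith) hr₂pos
      have e1 : {ω | (1 - r₂) * Y ω + r₂ * X ω ≤ d ∧ r₁ * Y ω + (1 - r₁) * X ω ≤ d}
          = {ω | (1 - r₁) * X ω + r₁ * Y ω ≤ d ∧ r₂ * X ω + (1 - r₂) * Y ω ≤ d} := by
        ext ω
        simp only [mem_setOf_eq]
        constructor <;> rintro ⟨a, b⟩ <;> exact ⟨by linarith, by linarith⟩
      have e2 : {ω | Y ω ≤ d ∧ X ω ≤ d} = {ω | X ω ≤ d ∧ Y ω ≤ d} := by
        ext ω; exact and_comm
      rw [e1, e2] at key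
      exact key
  · have : {ω | X ω ≤ d ∧ Y ω ≤ d} = X ⁻¹' Iic d ∩ Y ⁻¹' Iic d := rfl
    rw [this, hXY.measure_inter_preimage_eq_mul _ _ measurableSet_Iic measurableSet_Iic,
      ← Measure.map_apply hXm measurableSet_Iic, ← Measure.map_apply hYm measurableSet_Iic,
      hX, hY, uniformOnIcc_Iic s d hs hd.le hds.le,
      ← ENNReal.ofReal_mul (by positivity)]
    congr 1
    field_simp
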